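/- For real numbers m₂ > 0 and δ₀ > 0, the Lebesgue measure of {(x,y) ∈ (0,δ₀]×(0,δ₀] : 0 < y < x^{m₂} and y < t/x} equals −(1/(m₂+1)) · t·ln(t) + O(t) as t → 0⁺. -/

import Mathlib

open MeasureTheory Set Filter

lemma stmt4_aux (m₂ δ₀ t : ℝ) (hm₂ : 0 < m₂) (hδ₀ : 0 < δ₀) (ht : 0 < t)
    (h1 : t ^ (1/(m₂+1)) ≤ δ₀) (h2 : (t ^ (1/(m₂+1))) ^ m₂ ≤ δ₀) :
    (volume {p : ℝ × ℝ | p.1 ∈ Set.Ioc 0 δ₀ ∧ p.2 ∈ Set.Ioc 0 δ₀ ∧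
            0 < p.2 ∧ p.2 < p.1 ^ m₂ ∧ p.2 < t / p.1}).toReal
      = t/(m₂+1) + t * Real.log δ₀ - (1/(m₂+1)) * (t * Real.log t) := by
  have hm1 : (0:ℝ) < m₂ + 1 := by linarith
  set x₀ : ℝ := t ^ (1/(m₂+1)) with hx₀def
  have hx₀pos : 0 < x₀ := Real.rpow_pos_of_pos ht _
  have hx₀pow : x₀ ^ (m₂ + 1) = t := by
    rw [hx₀def, ← Real.rpow_mul ht.le, one_div, inv_mul_cancel₀ hm1.ne', Real.rpow_one]
  set f : ℝ → ℝ := fun x => min (min (x ^ m₂) (t / x)) δ₀ with hfdef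
  set S : Set (ℝ × ℝ) := {p : ℝ × ℝ | p.1 ∈ Set.Ioc 0 δ₀ ∧ p.2 ∈ Set.Ioc 0 δ₀ ∧
            0 < p.2 ∧ p.2 < p.1 ^ m₂ ∧ p.2 < t / p.1} with hSdef
  have hmes1 : Measurable fun x : ℝ => x ^ m₂ := (Real.continuous_rpow_const hm₂.le).measurable
  have hmesf : Measurable f :=
    (hmes1.min (measurable_const.div measurable_id)).min measurable_const
  have hSm : MeasurableSet S := by
    have : S = (Prod.fst ⁻¹' Ioc 0 δ₀) ∩ ((Prod.snd ⁻¹' Ioc 0 δ₀) ∩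
        ({p : ℝ × ℝ | 0 < p.2} ∩ ({p : ℝ × ℝ | p.2 < p.1 ^ m₂} ∩ {p : ℝ × ℝ | p.2 < t / p.1}))) := by
      ext p; simp [hSdef, and_assoc]
    rw [this]
    exact (measurableSet_Ioc.preimage measurable_fst).inter
      ((measurableSet_Ioc.preimage measurable_snd).inter
        ((measurableSet_lt measurable_const measurable_snd).inter
          ((measurableSet_lt measurable_snd (hmes1.comp measurable_fst)).inter
            (measurableSet_lt measurable_snd (measurable_const.div measurable_fst)))))
  -- Step A: slicing
  have hslice : ∀ x : ℝ, volume (Prod.mk x ⁻¹' S)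
      = (Ioc 0 δ₀).indicator (fun x => ENNReal.ofReal (f x)) x := by
    intro x
    by_cases hx : x ∈ Ioc 0 δ₀
    · rw [indicator_of_mem hx]
      have hpre : Prod.mk x ⁻¹' S = Ioc 0 δ₀ ∩ Iio (min (x ^ m₂) (t / x)) := by
        ext y
        simp only [hSdef, mem_preimage, mem_setOf_eq, mem_inter_iff, mem_Ioc, mem_Iio, lt_min_iff]
        constructor
        · rintro ⟨-, ⟨h0, hd⟩, -, ha, hb⟩; exact ⟨⟨h0, hd⟩, ha, hb⟩
        · rintro ⟨⟨h0, hd⟩, ha, hb⟩; exact ⟨hx, ⟨h0, hd⟩, h0, ha, hb⟩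
      rcases le_or_gt (min (x ^ m₂) (t / x)) δ₀ with h | h
      · have : Ioc 0 δ₀ ∩ Iio (min (x ^ m₂) (t / x)) = Ioo 0 (min (x ^ m₂) (t / x)) := by
          ext y
          simp only [mem_inter_iff, mem_Ioc, mem_Iio, mem_Ioo]
          constructor
          · rintro ⟨⟨h0, _⟩, hc⟩; exact ⟨h0, hc⟩
          · rintro ⟨h0, hc⟩; exact ⟨⟨h0, le_trans hc.le h⟩, hc⟩
        rw [hpre, this, Real.volume_Ioo, sub_zero]
        simp only [hfdef, min_eq_left h]
      · have : Ioc 0 δ₀ ∩ Iio (min (x ^ m₂) (t / x)) = Ioc 0 δ₀ := by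
          apply inter_eq_left.mpr
          intro y hy
          exact lt_of_le_of_lt hy.2 h
        rw [hpre, this, Real.volume_Ioc, sub_zero]
        simp only [hfdef, min_eq_right h.le]
    · rw [indicator_of_notMem hx]
      have : Prod.mk x ⁻¹' S = ∅ := by
        ext y; simp only [hSdef, mem_preimage, mem_setOf_eq, mem_empty_iff_false, iff_false]
        intro hc; exact hx hc.1
      rw [this, measure_empty]
  have hvol : volume S = ∫⁻ x in Ioc 0 δ₀, ENNReal.ofReal (f x) := by
    rw [Measure.volume_eq_prod, Measure.prod_apply hSm]
    simp_rw [hslice]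
    rw [lintegral_indicator measurableSet_Ioc]
  -- Step B: to real integral
  have hnn : 0 ≤ᵐ[volume.restrict (Ioc 0 δ₀)] f := by
    filter_upwards [ae_restrict_mem measurableSet_Ioc] with x hx
    have hxpos : 0 < x := hx.1
    have : 0 < min (min (x ^ m₂) (t / x)) δ₀ :=
      lt_min (lt_min (Real.rpow_pos_of_pos hxpos _) (div_pos ht hxpos)) hδ₀
    exact this.le
  have htoReal : (volume S).toReal = ∫ x in Ioc 0 δ₀, f x := by
    rw [hvol, integral_eq_lintegral_of_nonneg_ae hnn hmesf.aestronglyMeasurable.restrict]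
  -- integrability
  have hint : IntegrableOn f (Ioc 0 δ₀) := by
    apply Measure.integrableOn_of_bounded (M := δ₀)
    · rw [Real.volume_Ioc]; exact ENNReal.ofReal_ne_top
    · exact hmesf.aestronglyMeasurable
    · filter_upwards [ae_restrict_mem measurableSet_Ioc] with x hx
      have hxpos : 0 < x := hx.1
      rw [Real.norm_eq_abs, abs_le]
      constructor
      · have : 0 < min (min (x ^ m₂) (t / x)) δ₀ :=
          lt_min (lt_min (Real.rpow_pos_of_pos hxpos _) (div_pos ht hxpos)) hδ₀
        linarith
      · exact min_le_right _ _
  -- step C: split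
  have hsplit : Ioc (0:ℝ) x₀ ∪ Ioc x₀ δ₀ = Ioc 0 δ₀ := Ioc_union_Ioc_eq_Ioc hx₀pos.le h1
  have hIsum : ∫ x in Ioc 0 δ₀, f x = (∫ x in Ioc 0 x₀, f x) + ∫ x in Ioc x₀ δ₀, f x := by
    rw [← hsplit, setIntegral_union (Ioc_disjoint_Ioc_of_le le_rfl) measurableSet_Ioc
      (hint.mono_set (by rw [← hsplit]; exact subset_union_left))
      (hint.mono_set (by rw [← hsplit]; exact subset_union_right))]
  -- first piece
  have key1 : ∀ x ∈ Ioc (0:ℝ) x₀, f x = x ^ m₂ := by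
    intro x hx
    have hxpos : 0 < x := hx.1
    have hpow : x ^ (m₂ + 1) ≤ t := by
      rw [← hx₀pow]
      exact Real.rpow_le_rpow hxpos.le hx.2 hm1.le
    have hA : x ^ m₂ ≤ t / x := by
      have hmul : x ^ m₂ * x = x ^ (m₂ + 1) := by
        rw [Real.rpow_add hxpos, Real.rpow_one]
      rw [le_div_iff₀ hxpos, hmul]
      exact hpow
    have hB : x ^ m₂ ≤ δ₀ :=
      le_trans (Real.rpow_le_rpow hxpos.le hx.2 hm₂.le) h2
    rw [hfdef]
    simp only [min_eq_left hA, min_eq_left hB]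
  have keyval1 : ∫ x in Ioc (0:ℝ) x₀, f x = t / (m₂ + 1) := by
    rw [setIntegral_congr_fun measurableSet_Ioc key1,
      ← intervalIntegral.integral_of_le hx₀pos.le,
      integral_rpow (Or.inl (by linarith)), hx₀pow,
      Real.zero_rpow hm1.ne']
    ring
  -- second piece
  have key2 : ∀ x ∈ Ioc x₀ δ₀, f x = t / x := by
    intro x hx
    have hxpos : 0 < x := lt_trans hx₀pos hx.1
    have hpow : t ≤ x ^ (m₂ + 1) := by
      rw [← hx₀pow]
      exact Real.rpow_le_rpow hx₀pos.le hx.1.le hm1.le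
    have hA : t / x ≤ x ^ m₂ := by
      rw [div_le_iff₀ hxpos]
      calc t ≤ x ^ (m₂ + 1) := hpow
        _ = x ^ m₂ * x := by rw [Real.rpow_add hxpos, Real.rpow_one]
    have hB : t / x ≤ δ₀ := by
      have h3 : t / x ≤ t / x₀ := by
        apply div_le_div_of_nonneg_left ht.le hx₀pos hx.1.le
      have h4 : t / x₀ = x₀ ^ m₂ := by
        rw [div_eq_iff hx₀pos.ne', ← hx₀pow, Real.rpow_add hx₀pos, Real.rpow_one]
      exact le_trans h3 (h4 ▸ h2)
    rw [hfdef]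
    simp only [min_eq_right hA, min_eq_left hB]
  have keyval2 : ∫ x in Ioc x₀ δ₀, f x = t * (Real.log δ₀ - Real.log x₀) := by
    rw [setIntegral_congr_fun measurableSet_Ioc key2,
      ← intervalIntegral.integral_of_le h1]
    have : ∀ x : ℝ, t / x = t * (1 / x) := fun x => by ring
    simp_rw [this]
    rw [intervalIntegral.integral_const_mul, integral_one_div, Real.log_div hδ₀.ne' hx₀pos.ne']
    intro h0
    rw [Set.mem_uIcc] at h0
    rcases h0 with ⟨h0, _⟩ | ⟨h0, _⟩ <;> linarith
  have hlogx₀ : Real.log x₀ = (1/(m₂+1)) * Real.log t := Real.log_rpow ht _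
  rw [htoReal, hIsum, keyval1, keyval2, hlogx₀]
  ring

theorem stmt_4 (m₂ δ₀ : ℝ) (hm₂ : 0 < m₂) (hδ₀ : 0 < δ₀) :
    ∃ C > 0, ∀ᶠ t in nhdsWithin (0 : ℝ) (Set.Ioi 0),
      |(volume {p : ℝ × ℝ | p.1 ∈ Set.Ioc 0 δ₀ ∧ p.2 ∈ Set.Ioc 0 δ₀ ∧
            0 < p.2 ∧ p.2 < p.1 ^ m₂ ∧ p.2 < t / p.1}).toReal
          - (-(1 / (m₂ + 1))) * (t * Real.log t)| ≤ C * t := by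
  have hm1 : (0:ℝ) < m₂ + 1 := by linarith
  refine ⟨1/(m₂+1) + |Real.log δ₀| + 1, by positivity, ?_⟩
  set ε : ℝ := min (δ₀ ^ (m₂+1)) ((δ₀ ^ (1/m₂)) ^ (m₂+1)) with hεdef
  have hεpos : 0 < ε :=
    lt_min (Real.rpow_pos_of_pos hδ₀ _) (Real.rpow_pos_of_pos (Real.rpow_pos_of_pos hδ₀ _) _)
  filter_upwards [Ioo_mem_nhdsGT hεpos] with t htm
  obtain ⟨ht, htε⟩ := htm
  have h1 : t ^ (1/(m₂+1)) ≤ δ₀ := by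
    calc t ^ (1/(m₂+1)) ≤ (δ₀ ^ (m₂+1)) ^ (1/(m₂+1)) := by
          apply Real.rpow_le_rpow ht.le (le_of_lt (lt_of_lt_of_le htε (min_le_left _ _))) (by positivity)
      _ = δ₀ := by
          rw [← Real.rpow_mul hδ₀.le, mul_one_div, div_self hm1.ne', Real.rpow_one]
  have h2 : (t ^ (1/(m₂+1))) ^ m₂ ≤ δ₀ := by
    have hb : t ^ (1/(m₂+1)) ≤ δ₀ ^ (1/m₂) := by
      calc t ^ (1/(m₂+1)) ≤ ((δ₀ ^ (1/m₂)) ^ (m₂+1)) ^ (1/(m₂+1)) := by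
            apply Real.rpow_le_rpow ht.le (le_of_lt (lt_of_lt_of_le htε (min_le_right _ _))) (by positivity)
        _ = δ₀ ^ (1/m₂) := by
            rw [← Real.rpow_mul (by positivity), mul_one_div, div_self hm1.ne', Real.rpow_one]
    calc (t ^ (1/(m₂+1))) ^ m₂ ≤ (δ₀ ^ (1/m₂)) ^ m₂ := by
          apply Real.rpow_le_rpow (by positivity) hb hm₂.le
      _ = δ₀ := by
          rw [← Real.rpow_mul hδ₀.le, one_div, inv_mul_cancel₀ hm₂.ne', Real.rpow_one]
  rw [stmt4_aux m₂ δ₀ t hm₂ hδ₀ ht h1 h2]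
  have : t/(m₂+1) + t * Real.log δ₀ - (1/(m₂+1)) * (t * Real.log t)
      - (-(1 / (m₂ + 1))) * (t * Real.log t) = t * (1/(m₂+1)) + t * Real.log δ₀ := by ring
  rw [this]
  calc |t * (1/(m₂+1)) + t * Real.log δ₀| ≤ |t * (1/(m₂+1))| + |t * Real.log δ₀| := abs_add_le _ _
    _ = t * (1/(m₂+1)) + t * |Real.log δ₀| := by
        rw [abs_mul, abs_mul, abs_of_pos ht, abs_of_pos (by positivity : (0:ℝ) < 1/(m₂+1))]
    _ ≤ (1/(m₂+1) + |Real.log δ₀| + 1) * t := by nlinarith [abs_nonneg (Real.log δ₀)]
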